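/- For every real z with 0 < z < 1, one has ∫_0^1 (log(t)² + 3·log(t) + 1)·(t−1)/(z·t−1) dt = (1/z²)·( (1−z)·log(1−z) + 3(1−z)·Li_2(z) − 2(1−z)·Li_3(z) ). -/

import Mathlib

/-- The polylogarithm `Li_s(z) = Σ_{k ≥ 1} z^k / k^s`. -/
noncomputable def Li (s : ℕ) (z : ℝ) : ℝ := ∑' k : ℕ, z ^ (k + 1) / ((k : ℝ) + 1) ^ s


open Real MeasureTheory intervalIntegral Set Filter Topology

lemma neg_log_le_aux {t : ℝ} (ht : 0 < t) : -Real.log t ≤ 4 * t ^ (-(1/4) : ℝ) := by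
  have h1 : Real.log (t ^ (-(1/4) : ℝ)) ≤ t ^ (-(1/4) : ℝ) - 1 :=
    Real.log_le_sub_one_of_pos (Real.rpow_pos_of_pos ht _)
  rw [Real.log_rpow ht] at h1
  nlinarith [Real.rpow_pos_of_pos ht (-(1/4) : ℝ)]

lemma bound_aux {t : ℝ} (ht : 0 < t) (ht1 : t ≤ 1) (a b : ℝ) (n : ℕ) :
    ‖t ^ n * (Real.log t ^ 2 + a * Real.log t + b)‖
      ≤ ‖(16 + 4 * |a| + |b|) * t ^ (-(1/2) : ℝ)‖ := by
  have hq : (0:ℝ) < t ^ (-(1/4) : ℝ) := Real.rpow_pos_of_pos ht _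
  have hh : (0:ℝ) < t ^ (-(1/2) : ℝ) := Real.rpow_pos_of_pos ht _
  have hlog : |Real.log t| ≤ 4 * t ^ (-(1/4) : ℝ) := by
    rw [abs_of_nonpos (Real.log_nonpos ht.le ht1)]
    exact neg_log_le_aux ht
  have hsq : t ^ (-(1/4) : ℝ) * t ^ (-(1/4) : ℝ) = t ^ (-(1/2) : ℝ) := by
    rw [← Real.rpow_add ht]; norm_num
  have hqh : t ^ (-(1/4) : ℝ) ≤ t ^ (-(1/2) : ℝ) :=
    Real.rpow_le_rpow_of_exponent_ge ht ht1 (by norm_num)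
  have h1 : (1:ℝ) ≤ t ^ (-(1/2) : ℝ) := by
    rw [show (1:ℝ) = t ^ (0:ℝ) by rw [Real.rpow_zero]]
    exact Real.rpow_le_rpow_of_exponent_ge ht ht1 (by norm_num)
  have htn : |t ^ n| ≤ 1 := by
    rw [abs_of_nonneg (pow_nonneg ht.le n)]
    exact pow_le_one₀ ht.le ht1
  rw [norm_eq_abs, norm_eq_abs, abs_mul]
  have habs : |Real.log t ^ 2 + a * Real.log t + b|
      ≤ 16 * t ^ (-(1/2) : ℝ) + 4 * |a| * t ^ (-(1/2) : ℝ) + |b| * t ^ (-(1/2) : ℝ) := by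
    have h2 : Real.log t ^ 2 ≤ 16 * t ^ (-(1/2) : ℝ) := by
      have := sq_le_sq' (neg_le_of_abs_le hlog) (le_of_abs_le hlog)
      calc Real.log t ^ 2 ≤ (4 * t ^ (-(1/4):ℝ)) ^ 2 := this
        _ = 16 * (t ^ (-(1/4):ℝ) * t ^ (-(1/4):ℝ)) := by ring
        _ = 16 * t ^ (-(1/2):ℝ) := by rw [hsq]
    have h3 : |a * Real.log t| ≤ 4 * |a| * t ^ (-(1/2) : ℝ) := by
      rw [abs_mul]
      calc |a| * |Real.log t| ≤ |a| * (4 * t ^ (-(1/4):ℝ)) := by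
            exact mul_le_mul_of_nonneg_left hlog (abs_nonneg a)
        _ ≤ |a| * (4 * t ^ (-(1/2):ℝ)) := by nlinarith [abs_nonneg a]
        _ = 4 * |a| * t ^ (-(1/2):ℝ) := by ring
    have h4 : |b| ≤ |b| * t ^ (-(1/2) : ℝ) := le_mul_of_one_le_right (abs_nonneg b) h1
    calc |Real.log t ^ 2 + a * Real.log t + b|
        ≤ |Real.log t ^ 2| + |a * Real.log t| + |b| := by
          exact (abs_add_le _ _).trans (add_le_add_left (abs_add_le _ _) _)
      _ = Real.log t ^ 2 + |a * Real.log t| + |b| := by rw [abs_of_nonneg (sq_nonneg _)]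
      _ ≤ 16 * t ^ (-(1/2):ℝ) + 4 * |a| * t ^ (-(1/2):ℝ) + |b| * t ^ (-(1/2):ℝ) :=
          add_le_add (add_le_add h2 h3) h4
  calc |t ^ n| * |Real.log t ^ 2 + a * Real.log t + b|
      ≤ 1 * (16 * t ^ (-(1/2):ℝ) + 4 * |a| * t ^ (-(1/2):ℝ) + |b| * t ^ (-(1/2):ℝ)) :=
        mul_le_mul htn habs (abs_nonneg _) one_pos.le
    _ = (16 + 4 * |a| + |b|) * t ^ (-(1/2):ℝ) := by ring
    _ ≤ |(16 + 4 * |a| + |b|) * t ^ (-(1/2):ℝ)| := le_abs_self _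

lemma integrable_aux (n : ℕ) (a b : ℝ) :
    IntervalIntegrable (fun t : ℝ => t ^ n * (Real.log t ^ 2 + a * Real.log t + b))
      volume 0 1 := by
  apply IntervalIntegrable.mono_fun
    ((intervalIntegral.intervalIntegrable_rpow' (by norm_num : (-1:ℝ) < -(1/2))).const_mul
      (16 + 4 * |a| + |b|))
  · apply Measurable.aestronglyMeasurable
    measurability
  · rw [Set.uIoc_of_le (by norm_num : (0:ℝ) ≤ 1)]
    filter_upwards [ae_restrict_mem measurableSet_Ioc] with t ht
    exact bound_aux ht.1 ht.2 a b n

lemma intJ (n : ℕ) (a b : ℝ) :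
    ∫ t in (0:ℝ)..1, t ^ n * (Real.log t ^ 2 + a * Real.log t + b)
      = 2 / ((n:ℝ)+1) ^ 3 - a / ((n:ℝ)+1) ^ 2 + b / ((n:ℝ)+1) := by
  set c : ℝ := (n:ℝ) + 1 with hc
  have hc0 : (0:ℝ) < c := by positivity
  have hcne : c ≠ 0 := hc0.ne'
  set P : ℝ := 1 / c
  set Q : ℝ := a / c - 2 / c ^ 2
  set R : ℝ := 2 / c ^ 3 - a / c ^ 2 + b / c
  set F : ℝ → ℝ := fun t => t ^ (n+1) * (P * Real.log t ^ 2 + Q * Real.log t + R) with hF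
  have hF0 : F 0 = 0 := by simp [hF]
  have key : Tendsto F (𝓝[>] (0:ℝ)) (𝓝 0) := by
    have h1 : Tendsto (fun t : ℝ => Real.log t * t ^ ((1:ℝ)/2)) (𝓝[>] 0) (𝓝 0) :=
      tendsto_log_mul_rpow_nhdsGT_zero (by norm_num)
    have h2 : Tendsto (fun t : ℝ => Real.log t * t) (𝓝[>] 0) (𝓝 0) := by
      simpa using tendsto_log_mul_rpow_nhdsGT_zero one_pos
    have hpow : Tendsto (fun t : ℝ => t ^ n) (𝓝[>] 0) (𝓝 ((0:ℝ) ^ n)) :=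
      ((continuous_pow n).tendsto 0).mono_left nhdsWithin_le_nhds
    have hpow1 : Tendsto (fun t : ℝ => t ^ (n+1)) (𝓝[>] 0) (𝓝 ((0:ℝ) ^ (n+1))) :=
      ((continuous_pow (n+1)).tendsto 0).mono_left nhdsWithin_le_nhds
    have hA := (hpow.mul (h1.mul h1)).const_mul P
    have hB := (hpow.mul h2).const_mul Q
    have hC := hpow1.const_mul R
    have htot := (hA.add hB).add hC
    apply htot.congr' ?_ |>.mono_right ?_
    · filter_upwards [self_mem_nhdsWithin] with t (ht : (0:ℝ) < t)
      have hhalf : t ^ ((1:ℝ)/2) * t ^ ((1:ℝ)/2) = t := by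
        rw [← Real.rpow_add ht]; norm_num
      simp only [hF]
      have : Real.log t * t ^ ((1:ℝ)/2) * (Real.log t * t ^ ((1:ℝ)/2))
          = (t ^ ((1:ℝ)/2) * t ^ ((1:ℝ)/2)) * Real.log t ^ 2 := by ring
      rw [this, hhalf, pow_succ]
      ring
    · rw [show P * ((0:ℝ) ^ n * (0 * 0)) + Q * ((0:ℝ) ^ n * 0) + R * (0:ℝ) ^ (n+1) = 0 by
        simp]
  have hcont : ContinuousOn F (Icc 0 1) := by
    intro x hx
    rcases eq_or_lt_of_le hx.1 with h0 | h0
    · subst h0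
      refine ContinuousWithinAt.mono (t := Ici (0:ℝ)) ?_ (fun y hy => hy.1)
      rw [← continuousWithinAt_Ioi_iff_Ici]
      unfold ContinuousWithinAt
      rw [hF0]
      exact key
    · apply ContinuousAt.continuousWithinAt
      have hlog : ContinuousAt Real.log x := Real.continuousAt_log h0.ne'
      fun_prop (disch := exact h0.ne')
  have hderiv : ∀ x ∈ Ioo (0:ℝ) 1,
      HasDerivWithinAt F (x ^ n * (Real.log x ^ 2 + a * Real.log x + b)) (Ioi x) x := by
    intro x hx
    have hx0 : (0:ℝ) < x := hx.1
    have hxne : x ≠ 0 := hx0.ne'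
    have hlog : HasDerivAt Real.log x⁻¹ x := Real.hasDerivAt_log hxne
    have hg : HasDerivAt (fun t => P * Real.log t ^ 2 + Q * Real.log t + R)
        (P * (2 * Real.log x ^ 1 * x⁻¹) + Q * x⁻¹) x :=
      (((hlog.pow 2).const_mul P).add (hlog.const_mul Q)).add_const R
    have hp : HasDerivAt (fun t : ℝ => t ^ (n+1)) ((n+1 : ℕ) * x ^ n) x := by
      simpa using hasDerivAt_pow (n+1) x
    have := hp.mul hg
    apply HasDerivAt.hasDerivWithinAt
    refine this.congr_deriv ?_
    simp only [P, Q, R, hc]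
    have hxpow : x ^ (n+1) * x⁻¹ = x ^ n := by
      rw [pow_succ, mul_assoc, mul_inv_cancel₀ hxne, mul_one]
    push_cast
    field_simp
    ring
  have := intervalIntegral.integral_eq_sub_of_hasDeriv_right_of_le (by norm_num)
    hcont hderiv (integrable_aux n a b)
  rw [this, hF0]
  simp only [hF, one_pow, Real.log_one, one_mul]
  simp [R]

/-- `∫₀¹ (log²t + 3log t + 1)(t-1)/(zt-1) dt
  = (1/z²)((1-z)log(1-z) + 3(1-z)Li₂(z) - 2(1-z)Li₃(z))` for `0 < z < 1`. -/
theorem stmt9 (z : ℝ) (hz0 : 0 < z) (hz1 : z < 1) :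
    ∫ t in (0:ℝ)..1, (Real.log t ^ 2 + 3 * Real.log t + 1) * (t - 1) / (z * t - 1) =
      (1 / z ^ 2) * ((1 - z) * Real.log (1 - z) + 3 * (1 - z) * Li 2 z - 2 * (1 - z) * Li 3 z) := by
  have hzne : z ≠ 0 := hz0.ne'
  set F : ℕ → ℝ → ℝ := fun i t =>
    z ^ i * (t ^ i - t ^ (i+1)) * (Real.log t ^ 2 + 3 * Real.log t + 1) with hFdef
  set J : ℕ → ℝ := fun k => 2 / ((k:ℝ)+1) ^ 3 - 3 / ((k:ℝ)+1) ^ 2 + 1 / ((k:ℝ)+1) with hJdef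
  -- interval integrability of each F i
  have hFint : ∀ i, IntervalIntegrable (F i) volume 0 1 := by
    intro i
    have h1 := (integrable_aux i 3 1).const_mul (z ^ i)
    have h2 := (integrable_aux (i+1) 3 1).const_mul (z ^ i)
    apply (h1.sub h2).congr
    · intro t _
      simp only [F]
      ring
  have hFintOn : ∀ i, IntegrableOn (F i) (Ioc (0:ℝ) 1) volume := fun i =>
    (intervalIntegrable_iff_integrableOn_Ioc_of_le (by norm_num)).1 (hFint i)
  -- value of ∫ F i
  have hFval : ∀ i, ∫ t in (0:ℝ)..1, F i t = z ^ i * (J i - J (i+1)) := by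
    intro i
    have : ∀ t : ℝ, F i t
        = z ^ i * (t ^ i * (Real.log t ^ 2 + 3 * Real.log t + 1))
          - z ^ i * (t ^ (i+1) * (Real.log t ^ 2 + 3 * Real.log t + 1)) := by
      intro t; simp only [F]; ring
    rw [intervalIntegral.integral_congr (fun t _ => this t),
      intervalIntegral.integral_sub ((integrable_aux i 3 1).const_mul _)
        ((integrable_aux (i+1) 3 1).const_mul _),
      intervalIntegral.integral_const_mul, intervalIntegral.integral_const_mul,
      intJ, intJ]
    simp only [J]
    push_cast
    ring
  -- bound on ∫ ‖F i‖
  have hnorm_bound : ∀ i, ∫ t in Ioc (0:ℝ) 1, ‖F i t‖ ≤ 6 * z ^ i := by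
    intro i
    have hgint : IntegrableOn (fun t : ℝ => z ^ i * (t ^ i * (Real.log t ^ 2
        + (-3) * Real.log t + 1))) (Ioc (0:ℝ) 1) volume :=
      (intervalIntegrable_iff_integrableOn_Ioc_of_le (by norm_num)).1
        ((integrable_aux i (-3) 1).const_mul (z ^ i))
    have step1 : ∫ t in Ioc (0:ℝ) 1, ‖F i t‖
        ≤ ∫ t in Ioc (0:ℝ) 1, z ^ i * (t ^ i * (Real.log t ^ 2 + (-3) * Real.log t + 1)) := by
      apply setIntegral_mono_on (hFintOn i).norm hgint measurableSet_Ioc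
      intro t ht
      have ht0 : (0:ℝ) < t := ht.1
      have ht1 : t ≤ 1 := ht.2
      have hlt : Real.log t ≤ 0 := Real.log_nonpos ht0.le ht1
      have htpow : (0:ℝ) ≤ t ^ i - t ^ (i+1) := by
        rw [pow_succ]
        nlinarith [pow_nonneg ht0.le i, pow_pos ht0 i]
      have htpow2 : t ^ i - t ^ (i+1) ≤ t ^ i := by
        nlinarith [pow_pos ht0 (i+1)]
      have hzpow : (0:ℝ) ≤ z ^ i := pow_nonneg hz0.le i
      rw [norm_eq_abs]
      simp only [F]
      rw [abs_mul, abs_mul, abs_of_nonneg hzpow, abs_of_nonneg htpow]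
      have habs : |Real.log t ^ 2 + 3 * Real.log t + 1|
          ≤ Real.log t ^ 2 + (-3) * Real.log t + 1 := by
        rw [abs_le]; constructor <;> nlinarith
      calc z ^ i * (t ^ i - t ^ (i+1)) * |Real.log t ^ 2 + 3 * Real.log t + 1|
          ≤ z ^ i * t ^ i * (Real.log t ^ 2 + (-3) * Real.log t + 1) := by
            apply mul_le_mul
            · exact mul_le_mul_of_nonneg_left htpow2 hzpow
            · exact habs
            · exact abs_nonneg _
            · positivity
        _ = z ^ i * (t ^ i * (Real.log t ^ 2 + (-3) * Real.log t + 1)) := by ring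
    have step2 : ∫ t in Ioc (0:ℝ) 1, z ^ i * (t ^ i * (Real.log t ^ 2
        + (-3) * Real.log t + 1)) = z ^ i * (2 / ((i:ℝ)+1) ^ 3 + 3 / ((i:ℝ)+1) ^ 2
        + 1 / ((i:ℝ)+1)) := by
      rw [← intervalIntegral.integral_of_le (by norm_num : (0:ℝ) ≤ 1),
        intervalIntegral.integral_const_mul, intJ]
      ring
    have hc1 : (1:ℝ) ≤ (i:ℝ) + 1 := by
      have : (0:ℝ) ≤ (i:ℝ) := Nat.cast_nonneg i
      linarith
    have step3 : z ^ i * (2 / ((i:ℝ)+1) ^ 3 + 3 / ((i:ℝ)+1) ^ 2 + 1 / ((i:ℝ)+1))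
        ≤ 6 * z ^ i := by
      have hzpow : (0:ℝ) ≤ z ^ i := pow_nonneg hz0.le i
      have e1 : 2 / ((i:ℝ)+1) ^ 3 ≤ 2 := div_le_self (by norm_num) (one_le_pow₀ hc1)
      have e2 : 3 / ((i:ℝ)+1) ^ 2 ≤ 3 := div_le_self (by norm_num) (one_le_pow₀ hc1)
      have e3 : 1 / ((i:ℝ)+1) ≤ 1 := div_le_self (by norm_num) hc1
      nlinarith
    linarith [step1, step2.le, step2.ge, step3, step2 ▸ step1]
  -- summability of norms
  have hsum_norm : Summable (fun i => ∫ t in Ioc (0:ℝ) 1, ‖F i t‖) := by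
    apply Summable.of_nonneg_of_le
      (fun i => integral_nonneg (fun t => norm_nonneg _)) hnorm_bound
    exact (summable_geometric_of_lt_one hz0.le hz1).mul_left 6
  -- interchange sum and integral
  have hinter : HasSum (fun i => ∫ t in Ioc (0:ℝ) 1, F i t)
      (∫ t in Ioc (0:ℝ) 1, ∑' i, F i t) :=
    MeasureTheory.hasSum_integral_of_summable_integral_norm hFintOn hsum_norm
  -- pointwise sum identity on Ioc 0 1
  have hpt : ∀ t ∈ Ioc (0:ℝ) 1, (∑' i, F i t)
      = (Real.log t ^ 2 + 3 * Real.log t + 1) * (t - 1) / (z * t - 1) := by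
    intro t ht
    have ht0 : (0:ℝ) < t := ht.1
    have ht1 : t ≤ 1 := ht.2
    have hzt0 : (0:ℝ) ≤ z * t := by positivity
    have hzt1 : z * t < 1 := by nlinarith
    have hztne : z * t - 1 ≠ 0 := by intro h; nlinarith
    set L : ℝ := Real.log t ^ 2 + 3 * Real.log t + 1
    have hgeo : HasSum (fun i : ℕ => (z * t) ^ i) (1 - z * t)⁻¹ :=
      hasSum_geometric_of_lt_one hzt0 hzt1
    have hS : HasSum (fun i : ℕ => L * (1 - t) * (z * t) ^ i)
        (L * (1 - t) * (1 - z * t)⁻¹) := hgeo.mul_left _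
    have hfun : (fun i : ℕ => L * (1 - t) * (z * t) ^ i) = fun i => F i t := by
      funext i
      simp only [F, mul_pow, pow_succ, L]
      ring
    rw [hfun] at hS
    rw [hS.tsum_eq]
    have h1zt : (1:ℝ) - z * t ≠ 0 := by intro h; nlinarith
    field_simp
    rw [show t * z - 1 = -(1 - t * z) by ring, show t - 1 = -(1 - t) by ring, mul_neg,
      neg_div_neg_eq]
  -- closed form for the sum of integrals
  have hLiSummable : ∀ s : ℕ, Summable (fun k : ℕ => z ^ (k+1) / ((k:ℝ)+1) ^ s) := by
    intro s
    apply Summable.of_nonneg_of_le (fun k => by positivity)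
      (fun k => ?_) ((summable_geometric_of_lt_one hz0.le hz1).mul_left z)
    have hc1 : (1:ℝ) ≤ ((k:ℝ)+1) ^ s := one_le_pow₀ (by
      have : (0:ℝ) ≤ (k:ℝ) := Nat.cast_nonneg k
      linarith)
    calc z ^ (k+1) / ((k:ℝ)+1) ^ s ≤ z ^ (k+1) / 1 := by
          apply div_le_div_of_nonneg_left (by positivity) (by norm_num) hc1
      _ = z * z ^ k := by rw [div_one, pow_succ]; ring
  have hLi2 : HasSum (fun k : ℕ => z ^ (k+1) / ((k:ℝ)+1) ^ 2) (Li 2 z) :=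
    (hLiSummable 2).hasSum
  have hLi3 : HasSum (fun k : ℕ => z ^ (k+1) / ((k:ℝ)+1) ^ 3) (Li 3 z) :=
    (hLiSummable 3).hasSum
  have hLi1 : HasSum (fun k : ℕ => z ^ (k+1) / ((k:ℝ)+1)) (-Real.log (1 - z)) := by
    have := Real.hasSum_pow_div_log_of_abs_lt_one (x := z)
      (by rw [abs_of_pos hz0]; exact hz1)
    exact this
  set S : ℝ := 2 * Li 3 z - 3 * Li 2 z - Real.log (1 - z) with hSdef
  have hG : HasSum (fun k : ℕ => z ^ (k+1) * J k) S := by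
    have h := ((hLi3.mul_left 2).sub (hLi2.mul_left 3)).add hLi1
    have hfun : (fun k : ℕ => 2 * (z ^ (k+1) / ((k:ℝ)+1) ^ 3)
        - 3 * (z ^ (k+1) / ((k:ℝ)+1) ^ 2) + z ^ (k+1) / ((k:ℝ)+1))
        = fun k => z ^ (k+1) * J k := by
      funext k
      simp only [J]
      ring
    rw [hfun] at h
    rw [hSdef, sub_eq_add_neg (2 * Li 3 z - 3 * Li 2 z)]; exact h
  have hA : HasSum (fun i : ℕ => z ^ i * J i) (S / z) := by
    have h := hG.div_const z
    have hfun : (fun k : ℕ => z ^ (k+1) * J k / z) = fun k => z ^ k * J k := by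
      funext k
      rw [pow_succ]
      field_simp
    rwa [hfun] at h
  have hG0 : z ^ (0+1) * J 0 = 0 := by
    simp only [J]
    norm_num
  have hGshift : HasSum (fun k : ℕ => z ^ (k+1+1) * J (k+1)) S := by
    refine (hasSum_nat_add_iff (f := fun k : ℕ => z ^ (k+1) * J k) 1).mpr ?_
    rw [Finset.sum_range_one, hG0, add_zero]
    exact hG
  have hB : HasSum (fun i : ℕ => z ^ i * J (i+1)) (S / z ^ 2) := by
    have h := hGshift.div_const (z ^ 2)
    have hfun : (fun k : ℕ => z ^ (k+1+1) * J (k+1) / z ^ 2)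
        = fun k => z ^ k * J (k+1) := by
      funext k
      field_simp [pow_succ]
      ring
    rwa [hfun] at h
  have hTot : HasSum (fun i : ℕ => z ^ i * (J i - J (i+1))) (S / z - S / z ^ 2) := by
    have h := hA.sub hB
    have hfun : (fun i : ℕ => z ^ i * J i - z ^ i * J (i+1))
        = fun i => z ^ i * (J i - J (i+1)) := by
      funext i
      ring
    rwa [hfun] at h
  -- put everything together
  have hfun2 : (fun i => ∫ t in Ioc (0:ℝ) 1, F i t)
      = fun i => z ^ i * (J i - J (i+1)) := by
    funext i
    rw [← intervalIntegral.integral_of_le (by norm_num : (0:ℝ) ≤ 1), hFval]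
  rw [hfun2] at hinter
  have hval : ∫ t in Ioc (0:ℝ) 1, ∑' i, F i t = S / z - S / z ^ 2 :=
    hinter.unique hTot
  rw [intervalIntegral.integral_of_le (by norm_num : (0:ℝ) ≤ 1),
    ← MeasureTheory.setIntegral_congr_fun measurableSet_Ioc hpt, hval]
  simp only [S]
  field_simp
  ring
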